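/- Let A be an invertible n×n complex matrix and T = σI for σ ∈ ℂ. Then the (2m+1)-block tridiagonal matrix with diagonal blocks A and off-diagonal blocks -T is invertible if and only if for every eigenvalue λ of A, the scalar (2m+1)×(2m+1) tridiagonal matrix with diagonal λ and off-diagonals -σ is invertible, i.e., λ ≠ 2σ cos(jπ/(2m+2)) for all j = 1,…,2m+1. -/

import Mathlib

open Matrix

namespace Stmt10Aux

variable (m : ℕ)

/-- angle -/
noncomputable def th (k : Fin (2*m+1)) : ℝ := ((k : ℕ) + 1) * Real.pi / (2*m+2)

/-- eigenvector matrix -/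
noncomputable def P : Matrix (Fin (2*m+1)) (Fin (2*m+1)) ℂ :=
  fun i k => ((Real.sin (((i : ℕ) + 1) * th m k) : ℝ) : ℂ)

/-- tridiagonal 0/1 matrix -/
def J : Matrix (Fin (2*m+1)) (Fin (2*m+1)) ℂ :=
  fun i j => if (i : ℕ) + 1 = j ∨ (j : ℕ) + 1 = i then 1 else 0

/-- eigenvalues of J -/
noncomputable def c (k : Fin (2*m+1)) : ℂ := ((2 * Real.cos (th m k) : ℝ) : ℂ)

lemma th_pos (k : Fin (2*m+1)) : 0 < th m k := by
  apply div_pos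
  · positivity
  · positivity

lemma th_lt_pi (k : Fin (2*m+1)) : th m k < Real.pi := by
  rw [th, div_lt_iff₀ (by positivity)]
  have hk : ((k : ℕ) : ℝ) < 2*m+1 := by exact_mod_cast k.is_lt
  nlinarith [Real.pi_pos]

lemma psi_boundary (k : Fin (2*m+1)) :
    Real.sin ((2*m+2 : ℕ) * th m k) = 0 := by
  have h : ((2*m+2 : ℕ) : ℝ) * th m k = ((k : ℕ) + 1) * Real.pi := by
    rw [th]
    field_simp
    push_cast
    ring
  rw [h]
  exact_mod_cast Real.sin_nat_mul_pi ((k : ℕ) + 1)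

lemma trig (a : ℕ) (k : Fin (2*m+1)) :
    Real.sin ((a : ℝ) * th m k) + Real.sin ((a + 2 : ℝ) * th m k)
      = 2 * Real.cos (th m k) * Real.sin ((a + 1 : ℝ) * th m k) := by
  have h1 := Real.sin_add ((a+1 : ℝ) * th m k) (th m k)
  have h2 := Real.sin_sub ((a+1 : ℝ) * th m k) (th m k)
  have e1 : (a : ℝ) * th m k = (a+1 : ℝ) * th m k - th m k := by ring
  have e2 : (a + 2 : ℝ) * th m k = (a+1 : ℝ) * th m k + th m k := by ring
  rw [e1, e2, h1, h2]
  ring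

lemma sum_indicator {N : ℕ} (t : ℕ) (f : Fin N → ℂ) :
    (∑ j : Fin N, if (j : ℕ) = t then f j else 0) = if h : t < N then f ⟨t, h⟩ else 0 := by
  split
  · next h =>
    rw [Finset.sum_eq_single (⟨t, h⟩ : Fin N)]
    · simp
    · intro j _ hj
      rw [if_neg]
      intro hc
      exact hj (Fin.ext hc)
    · simp
  · next h =>
    apply Finset.sum_eq_zero
    intro j _
    rw [if_neg]
    intro hc
    exact h (hc ▸ j.is_lt)

lemma JP_eq : J m * P m = P m * Matrix.diagonal (c m) := by
  ext i k
  rw [Matrix.mul_apply, Matrix.mul_diagonal]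
  have hsplit : ∀ j : Fin (2*m+1), J m i j * P m j k =
      (if (j : ℕ) = (i : ℕ) + 1 then P m j k else 0)
        + (if 1 ≤ (i : ℕ) then (if (j : ℕ) = (i : ℕ) - 1 then P m j k else 0) else 0) := by
    intro j
    simp only [J]
    split_ifs
    all_goals try ring
    all_goals exfalso
    all_goals (try casesm* _ ∨ _)
    all_goals (try push_neg at *)
    all_goals omega
  rw [Finset.sum_congr rfl (fun j _ => hsplit j), Finset.sum_add_distrib,
    sum_indicator, Finset.sum_ite_irrel, Finset.sum_const_zero, sum_indicator]
  have e1 : (if h : (i : ℕ) + 1 < 2*m+1 then P m ⟨(i : ℕ) + 1, h⟩ k else 0)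
      = ((Real.sin ((((i:ℕ):ℝ) + 2) * th m k) : ℝ) : ℂ) := by
    split
    · next h =>
      simp only [P]
      norm_num
      congr 1
      push_cast
      ring
    · next h =>
      have hi : (i : ℕ) = 2*m := by omega
      have : (((i:ℕ):ℝ) + 2) * th m k = ((2*m+2 : ℕ) : ℝ) * th m k := by
        rw [hi]; push_cast; ring
      rw [this, psi_boundary m k, Complex.ofReal_zero]
  have e2 : (if 1 ≤ (i : ℕ) then
        (if h : (i : ℕ) - 1 < 2*m+1 then P m ⟨(i : ℕ) - 1, h⟩ k else 0) else 0)
      = ((Real.sin ((((i:ℕ):ℝ)) * th m k) : ℝ) : ℂ) := by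
    split
    · next h =>
      rw [dif_pos (by omega)]
      simp only [P]
      congr 2
      push_cast [Nat.cast_sub h]
      ring
    · next h =>
      have hi : (i : ℕ) = 0 := by omega
      rw [hi]
      norm_num
  rw [e1, e2]
  have goal : ((Real.sin (((i:ℕ) : ℝ) * th m k) : ℝ) : ℂ)
      + ((Real.sin ((((i:ℕ):ℝ) + 2) * th m k) : ℝ) : ℂ)
      = P m i k * c m k := by
    have h := trig m (i : ℕ) k
    rw [P, c, ← Complex.ofReal_mul, ← Complex.ofReal_add]
    norm_cast
    push_cast at h ⊢
    linarith
  rw [add_comm]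
  exact goal

lemma th_injective : Function.Injective (th m) := by
  intro k k' h
  rw [th, th, div_eq_div_iff (by positivity) (by positivity)] at h
  have h1 := mul_right_cancel₀ (by positivity : (0:ℝ) < 2*(m:ℝ)+2).ne' h
  have h2 := mul_right_cancel₀ Real.pi_ne_zero h1
  have : ((k : ℕ) : ℝ) = ((k' : ℕ) : ℝ) := by linarith
  exact Fin.ext (by exact_mod_cast this)

lemma c_injective : Function.Injective (c m) := by
  intro k k' h
  apply th_injective m
  have h' : Real.cos (th m k) = Real.cos (th m k') := by
    rw [c, c] at h
    have := Complex.ofReal_injective h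
    linarith
  exact Real.injOn_cos ⟨(th_pos m k).le, (th_lt_pi m k).le⟩
    ⟨(th_pos m k').le, (th_lt_pi m k').le⟩ h'

lemma isUnit_P : IsUnit (P m) := by
  rw [← Matrix.linearIndependent_cols_iff_isUnit]
  apply Module.End.eigenvectors_linearIndependent' ((J m).mulVecLin) (c m) (c_injective m)
  intro k
  constructor
  · rw [Module.End.mem_eigenspace_iff]
    funext i
    have := congrFun (congrFun (JP_eq m) i) k
    rw [Matrix.mul_apply, Matrix.mul_diagonal] at this
    simpa [Matrix.mulVecLin_apply, Matrix.mulVec, dotProduct, Matrix.transpose_apply,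
      mul_comm] using this
  · intro hzero
    have h0 : (2*m+1) ≠ 0 := by omega
    have := congrFun hzero ⟨0, by omega⟩
    simp only [Matrix.transpose_apply, Matrix.col_apply, Fin.val_mk, P, Pi.zero_apply] at this
    have hsin : Real.sin (th m k) > 0 :=
      Real.sin_pos_of_pos_of_lt_pi (th_pos m k) (th_lt_pi m k)
    rw [show ((0:ℕ) + 1 : ℝ) = 1 by norm_num, one_mul] at this
    exact absurd (Complex.ofReal_eq_zero.mp this) (ne_of_gt hsin)

end Stmt10Aux


open Kronecker

/-- The block tridiagonal Toeplitz matrix with diagonal blocks `A` and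
off-diagonal blocks `-σI` is invertible iff no eigenvalue `λ` of `A` equals
`2σ cos(jπ/(2m+2))` for some `j = 1, …, 2m+1`. -/
theorem stmt_10 {n m : ℕ} (A : Matrix (Fin n) (Fin n) ℂ) (hA : IsUnit A) (σ : ℂ)
    (G : Matrix (Fin (2 * m + 1) × Fin n) (Fin (2 * m + 1) × Fin n) ℂ)
    (hG : ∀ (i j : Fin (2 * m + 1)) (a b : Fin n), G (i, a) (j, b) =
      if i = j then A a b
      else if i.val + 1 = j.val ∨ j.val + 1 = i.val then
        (if a = b then -σ else 0) else 0) :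
    IsUnit G ↔ ∀ lam ∈ spectrum ℂ A, ∀ j ∈ Finset.Icc 1 (2 * m + 1),
      lam ≠ 2 * σ * Complex.cos ((j : ℂ) * (Real.pi : ℂ) / (2 * (m : ℂ) + 2)) := by
  classical
  set D : Matrix (Fin (2*m+1)) (Fin (2*m+1)) ℂ := Matrix.diagonal (Stmt10Aux.c m) with hD
  set B : Fin (2*m+1) → Matrix (Fin n) (Fin n) ℂ :=
    fun k => A - (σ * Stmt10Aux.c m k) • 1 with hB
  -- G as a Kronecker combination
  have hGdef : G = (1 : Matrix (Fin (2*m+1)) (Fin (2*m+1)) ℂ) ⊗ₖ A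
      - Stmt10Aux.J m ⊗ₖ (σ • (1 : Matrix (Fin n) (Fin n) ℂ)) := by
    ext ⟨i, a⟩ ⟨j, b⟩
    rw [hG]
    simp only [Matrix.sub_apply, Matrix.kroneckerMap_apply, Matrix.one_apply, Stmt10Aux.J,
      Matrix.smul_apply, Matrix.one_apply, smul_eq_mul]
    by_cases hij : i = j
    · subst hij
      rw [if_pos rfl, if_pos rfl, one_mul,
        if_neg (by push_neg; exact ⟨by omega, by omega⟩), zero_mul, sub_zero]
    · rw [if_neg hij, if_neg hij, zero_mul]
      have hvij : (i : ℕ) ≠ (j : ℕ) := fun h => hij (Fin.ext h)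
      split_ifs <;> ring
  -- the conjugation identity
  have hM : G * ((Stmt10Aux.P m) ⊗ₖ (1 : Matrix (Fin n) (Fin n) ℂ))
      = ((Stmt10Aux.P m) ⊗ₖ (1 : Matrix (Fin n) (Fin n) ℂ))
        * ((1 : Matrix (Fin (2*m+1)) (Fin (2*m+1)) ℂ) ⊗ₖ A
            - D ⊗ₖ (σ • (1 : Matrix (Fin n) (Fin n) ℂ))) := by
    rw [hGdef, Matrix.sub_mul, Matrix.mul_sub, ← Matrix.mul_kronecker_mul,
      ← Matrix.mul_kronecker_mul, ← Matrix.mul_kronecker_mul, ← Matrix.mul_kronecker_mul]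
    simp only [Matrix.one_mul, Matrix.mul_one]
    rw [Stmt10Aux.JP_eq]
  have hPdet : ((Stmt10Aux.P m) ⊗ₖ (1 : Matrix (Fin n) (Fin n) ℂ)).det ≠ 0 := by
    rw [Matrix.det_kronecker, Matrix.det_one, one_pow, mul_one]
    exact pow_ne_zero _ (IsUnit.ne_zero ((Matrix.isUnit_iff_isUnit_det _).mp
      (Stmt10Aux.isUnit_P m)))
  have hdetG : G.det = ((1 : Matrix (Fin (2*m+1)) (Fin (2*m+1)) ℂ) ⊗ₖ A
      - D ⊗ₖ (σ • (1 : Matrix (Fin n) (Fin n) ℂ))).det := by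
    have h := congrArg Matrix.det hM
    rw [Matrix.det_mul, Matrix.det_mul, mul_comm (Stmt10Aux.P m ⊗ₖ 1).det] at h
    exact mul_right_cancel₀ hPdet h
  -- the middle matrix is block diagonal
  have hMdiag : (1 : Matrix (Fin (2*m+1)) (Fin (2*m+1)) ℂ) ⊗ₖ A
      - D ⊗ₖ (σ • (1 : Matrix (Fin n) (Fin n) ℂ))
      = (Matrix.blockDiagonal B).submatrix (Equiv.prodComm (Fin (2*m+1)) (Fin n))
          (Equiv.prodComm (Fin (2*m+1)) (Fin n)) := by
    ext ⟨k, a⟩ ⟨k', b⟩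
    simp only [Matrix.sub_apply, Matrix.kroneckerMap_apply, Matrix.one_apply,
      Matrix.smul_apply, smul_eq_mul, Matrix.submatrix_apply, Equiv.prodComm_apply,
      Prod.swap_prod_mk, Matrix.blockDiagonal_apply, hD, Matrix.diagonal_apply, hB,
      Matrix.sub_apply, Matrix.smul_apply, Matrix.one_apply, smul_eq_mul]
    by_cases hk : k = k'
    · subst hk
      simp [mul_comm]
    · rw [if_neg hk, if_neg hk, if_neg hk]
      ring
  have hdet2 : G.det = ∏ k, (B k).det := by
    rw [hdetG, hMdiag, Matrix.det_submatrix_equiv_self, Matrix.det_blockDiagonal]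
  -- spectrum characterization
  have spec : ∀ z : ℂ, z ∉ spectrum ℂ A ↔ (A - z • 1).det ≠ 0 := by
    intro z
    rw [spectrum.mem_iff, not_not, Algebra.algebraMap_eq_smul_one,
      Matrix.isUnit_iff_isUnit_det, isUnit_iff_ne_zero]
    constructor
    · intro h
      have : A - z • 1 = -(z • 1 - A) := (neg_sub _ _).symm
      rw [this, Matrix.det_neg]
      intro hc
      rcases mul_eq_zero.mp hc with hc | hc
      · exact pow_ne_zero _ (neg_ne_zero.mpr one_ne_zero) hc
      · exact h hc
    · intro h
      have : z • (1 : Matrix (Fin n) (Fin n) ℂ) - A = -(A - z • 1) := (neg_sub _ _).symm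
      rw [this, Matrix.det_neg]
      intro hc
      rcases mul_eq_zero.mp hc with hc | hc
      · exact pow_ne_zero _ (neg_ne_zero.mpr one_ne_zero) hc
      · exact h hc
  -- the eigenvalue values
  have hval : ∀ k : Fin (2*m+1), σ * Stmt10Aux.c m k
      = 2 * σ * Complex.cos ((((k : ℕ) + 1 : ℕ) : ℂ) * (Real.pi : ℂ) / (2 * (m : ℂ) + 2)) := by
    intro k
    have harg : ((((k : ℕ) + 1 : ℕ)) : ℂ) * (Real.pi : ℂ) / (2 * (m : ℂ) + 2)
        = ((Stmt10Aux.th m k : ℝ) : ℂ) := by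
      rw [Stmt10Aux.th]
      push_cast
      ring
    rw [harg, ← Complex.ofReal_cos, Stmt10Aux.c]
    push_cast
    ring
  -- put it together
  rw [Matrix.isUnit_iff_isUnit_det, isUnit_iff_ne_zero, hdet2, Finset.prod_ne_zero_iff]
  constructor
  · intro h lam hlam j hj heq
    obtain ⟨hj1, hj2⟩ := Finset.mem_Icc.mp hj
    have hk : j - 1 < 2*m+1 := by omega
    have hdet := h ⟨j - 1, hk⟩ (Finset.mem_univ _)
    rw [hB] at hdet
    have hnotmem := (spec _).mpr hdet
    apply hnotmem
    rw [hval ⟨j - 1, hk⟩]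
    have hjj : ((((⟨j - 1, hk⟩ : Fin (2*m+1)) : ℕ) + 1 : ℕ)) = j := by
      show j - 1 + 1 = j
      omega
    rw [hjj]
    exact heq ▸ hlam
  · intro h k _
    rw [hB]
    apply (spec _).mp
    intro hmem
    exact h _ hmem ((k : ℕ) + 1)
      (Finset.mem_Icc.mpr ⟨by omega, by omega⟩) (hval k)
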